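/- (Reduction Theorem) For any non-negative integer m, natural numbers q ≤ n, and a sequence a : ℕ → ℝ: Σ_{q ≤ N_1 ≤ ... ≤ N_m ≤ n} a(N_m)···a(N_1) = Σ over all tuples (y_1,...,y_m) of non-negative integers with Σ_{i=1}^m i·y_i = m of Π_{i=1}^{m} (1/y_i!) · ((1/i) Σ_{N=q}^{n} a(N)^i)^{y_i}. -/

import Mathlib

open Finset

/-- Recurrent sum of a single sequence:
`recSum1 a q m n = Σ_{q ≤ N_1 ≤ ⋯ ≤ N_m ≤ n} a N_m ⋯ a N_1`, with order `0` giving `1`. -/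
def recSum1 (a : ℕ → ℝ) (q : ℕ) : ℕ → ℕ → ℝ
  | 0, _ => 1
  | m + 1, n => ∑ N ∈ Finset.Icc q n, a N * recSum1 a q m N

section Ext
variable {A : Type*} [CommMonoid A]

@[to_additive]
lemma prod_ext_fin {M m : ℕ} (hm : m ≤ M) (y : Fin M → ℕ)
    (h0 : ∀ j : Fin M, m ≤ j.1 → y j = 0) (G : ℕ → ℕ → A) (hG : ∀ t, G t 0 = 1) :
    ∏ j : Fin M, G j.1 (y j) = ∏ j : Fin m, G j.1 (y (Fin.castLE hm j)) := by
  have e1 : ∏ j : Fin M, G j.1 (y j)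
      = ∏ j ∈ Finset.range M, (fun t => if h : t < M then G t (y ⟨t, h⟩) else 1) j := by
    rw [← Fin.prod_univ_eq_prod_range]
    exact Finset.prod_congr rfl fun j _ => by simp [j.2]
  have e2 : ∏ j : Fin m, G j.1 (y (Fin.castLE hm j))
      = ∏ j ∈ Finset.range m, (fun t => if h : t < M then G t (y ⟨t, h⟩) else 1) j := by
    rw [← Fin.prod_univ_eq_prod_range]
    refine Finset.prod_congr rfl fun j _ => by
      have : (j : ℕ) < M := lt_of_lt_of_le j.2 hm
      simp [this, Fin.castLE]
  rw [e1, e2, ← Finset.prod_range_mul_prod_Ico _ hm]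
  have : ∀ j ∈ Finset.Ico m M, (fun t => if h : t < M then G t (y ⟨t, h⟩) else 1) j = 1 := by
    intro j hj
    rcases Finset.mem_Ico.mp hj with ⟨h1, h2⟩
    simp only [dif_pos h2]
    rw [h0 ⟨j, h2⟩ h1, hG]
  rw [Finset.prod_eq_one this, mul_one]

end Ext

namespace RedThm

variable (a : ℕ → ℝ) (q n : ℕ)

noncomputable def p (k : ℕ) : ℝ := ∑ N ∈ Finset.Icc q n, a N ^ k

noncomputable def f (k c : ℕ) : ℝ :=
  (1 / (Nat.factorial c : ℝ)) * ((1 / (k : ℝ)) * p a q n k) ^ c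

def ParB (M m : ℕ) : Finset (Fin M → ℕ) :=
  (Fintype.piFinset fun _ => Finset.range (m + 1)).filter
    (fun y => ∑ j, (j.1 + 1) * y j = m)

lemma mem_ParB {M m : ℕ} {y : Fin M → ℕ} :
    y ∈ ParB M m ↔ ∑ j, (j.1 + 1) * y j = m := by
  constructor
  · intro h; exact (Finset.mem_filter.mp h).2
  · intro h
    refine Finset.mem_filter.mpr ⟨Fintype.mem_piFinset.mpr fun j => ?_, h⟩
    rw [Finset.mem_range, Nat.lt_succ_iff]
    calc y j ≤ (j.1 + 1) * y j := Nat.le_mul_of_pos_left _ (Nat.succ_pos _)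
    _ ≤ ∑ j, (j.1 + 1) * y j := Finset.single_le_sum (f := fun i => (i.1 + 1) * y i) (fun i _ => Nat.zero_le _) (Finset.mem_univ j)
    _ = m := h

lemma term_le_of_mem {M m : ℕ} {y : Fin M → ℕ} (hy : y ∈ ParB M m) (j : Fin M) :
    (j.1 + 1) * y j ≤ m := by
  rw [mem_ParB] at hy
  calc (j.1 + 1) * y j ≤ ∑ j, (j.1 + 1) * y j :=
        Finset.single_le_sum (f := fun i => (i.1 + 1) * y i) (fun i _ => Nat.zero_le _) (Finset.mem_univ j)
  _ = m := hy

lemma apply_eq_zero_of_le {M m : ℕ} {y : Fin M → ℕ} (hy : y ∈ ParB M m) {j : Fin M}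
    (hj : m ≤ j.1) : y j = 0 := by
  by_contra h
  have h1 := term_le_of_mem hy j
  have h2 : j.1 + 1 ≤ (j.1 + 1) * y j := Nat.le_mul_of_pos_right _ (Nat.pos_of_ne_zero h)
  omega

noncomputable def Rb (M m : ℕ) : ℝ := ∑ y ∈ ParB M m, ∏ j, f a q n (j.1 + 1) (y j)

lemma f_zero (k : ℕ) : f a q n k 0 = 1 := by simp [f]

lemma stab {M m : ℕ} (hm : m ≤ M) : Rb a q n M m = Rb a q n m m := by
  unfold Rb
  refine Finset.sum_nbij' (i := fun y (j : Fin m) => y (Fin.castLE hm j))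
    (j := fun y (j : Fin M) => if h : j.1 < m then y ⟨j.1, h⟩ else 0)
    ?_ ?_ ?_ ?_ ?_
  · intro y hy
    rw [mem_ParB]
    have := sum_ext_fin hm y (fun j hj => apply_eq_zero_of_le hy hj)
      (fun t c => (t + 1) * c) (fun t => by simp)
    rw [← this]
    exact mem_ParB.mp hy
  · intro y hy
    rw [mem_ParB]
    have h0 : ∀ j : Fin M, m ≤ j.1 →
        (if h : j.1 < m then y ⟨j.1, h⟩ else 0) = 0 := by
      intro j hj; rw [dif_neg (by omega)]
    calc ∑ j : Fin M, (j.1 + 1) * (if h : j.1 < m then y ⟨j.1, h⟩ else 0)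
        = ∑ j : Fin m, (j.1 + 1) *
            (if h : (Fin.castLE hm j).1 < m then y ⟨(Fin.castLE hm j).1, h⟩ else 0) :=
          sum_ext_fin hm (fun j : Fin M => if h : j.1 < m then y ⟨j.1, h⟩ else 0)
            h0 (fun t c => (t + 1) * c) (fun t => by simp)
      _ = ∑ j : Fin m, (j.1 + 1) * y j := by
          refine Finset.sum_congr rfl fun j _ => ?_
          have hj : (Fin.castLE hm j).1 < m := j.2
          rw [dif_pos hj]
          exact congrArg _ (congrArg y (Fin.ext (by simp)))
      _ = m := mem_ParB.mp hy
  · intro y hy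
    funext j
    by_cases h : j.1 < m
    · simp [h, Fin.castLE]
    · have h2 : y j = 0 := apply_eq_zero_of_le hy (by omega)
      simp [h, h2]
  · intro y hy
    funext j
    simp
  · intro y hy
    exact prod_ext_fin hm y (fun j hj => apply_eq_zero_of_le hy hj)
      (fun t c => f a q n (t + 1) c) (fun t => f_zero a q n (t + 1))

lemma f_step (k c : ℕ) (hk : k ≠ 0) :
    ((k * (c + 1) : ℕ) : ℝ) * f a q n k (c + 1) = p a q n k * f a q n k c := by
  have hk' : (k : ℝ) ≠ 0 := Nat.cast_ne_zero.mpr hk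
  have hc : ((Nat.factorial c : ℝ)) ≠ 0 := Nat.cast_ne_zero.mpr (Nat.factorial_ne_zero c)
  simp only [f, Nat.factorial_succ, pow_succ]
  push_cast
  field_simp

lemma update_mul_eq (m : ℕ) (y : Fin m → ℕ) (i : Fin m) (c : ℕ) :
    (fun j : Fin m => (j.1 + 1) * (Function.update y i c j))
      = Function.update (fun j : Fin m => (j.1 + 1) * y j) i ((i.1 + 1) * c) := by
  funext j
  by_cases h : j = i
  · subst h; simp
  · simp [Function.update_apply, h]

lemma update_f_eq (m : ℕ) (y : Fin m → ℕ) (i : Fin m) (c : ℕ) :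
    (fun j : Fin m => f a q n (j.1 + 1) (Function.update y i c j))
      = Function.update (fun j : Fin m => f a q n (j.1 + 1) (y j)) i (f a q n (i.1 + 1) c) := by
  funext j
  by_cases h : j = i
  · subst h; simp
  · simp [Function.update_apply, h]

lemma Rb_rec_term (m : ℕ) (i : Fin m) :
    ∑ y ∈ ParB m m, (((i.1 + 1) * y i : ℕ) : ℝ) * ∏ j, f a q n (j.1 + 1) (y j)
      = p a q n (i.1 + 1) * Rb a q n m (m - (i.1 + 1)) := by
  classical
  rw [← Finset.sum_filter_of_ne (p := fun y => y i ≠ 0)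
    (fun y hy hne h0 => hne (by simp [h0]))]
  rw [Rb, Finset.mul_sum]
  refine Finset.sum_nbij' (i := fun y => Function.update y i (y i - 1))
    (j := fun y => Function.update y i (y i + 1)) ?_ ?_ ?_ ?_ ?_
  · intro y hy
    obtain ⟨hy1, hy2⟩ := Finset.mem_filter.mp hy
    obtain ⟨c, hc⟩ : ∃ c, y i = c + 1 := ⟨y i - 1, by omega⟩
    rw [mem_ParB]
    have h1 : (i.1 + 1) * y i + ∑ j ∈ Finset.univ \ {i}, (j.1 + 1) * y j = m := by
      rw [← Finset.sum_eq_add_sum_sdiff_singleton_of_mem (Finset.mem_univ i)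
        (fun j => (j.1 + 1) * y j)]
      exact mem_ParB.mp hy1
    have h2 : ∑ j, (j.1 + 1) * (Function.update y i (y i - 1) j)
        = (i.1 + 1) * (y i - 1) + ∑ j ∈ Finset.univ \ {i}, (j.1 + 1) * y j := by
      rw [show (fun j : Fin m => (j.1 + 1) * (Function.update y i (y i - 1) j))
          = Function.update (fun j : Fin m => (j.1 + 1) * y j) i ((i.1 + 1) * (y i - 1))
          from update_mul_eq m y i _]
      exact Finset.sum_update_of_mem (Finset.mem_univ i) _ _
    rw [h2, hc] at *
    have e1 : (i.1 + 1) * (c + 1) = (i.1 + 1) * c + (i.1 + 1) := by ring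
    simp only [Nat.add_sub_cancel]
    omega
  · intro y hy
    have hym := mem_ParB.mp hy
    refine Finset.mem_filter.mpr ⟨?_, by simp⟩
    rw [mem_ParB]
    have h1 : (i.1 + 1) * y i + ∑ j ∈ Finset.univ \ {i}, (j.1 + 1) * y j = m - (i.1 + 1) := by
      rw [← Finset.sum_eq_add_sum_sdiff_singleton_of_mem (Finset.mem_univ i)
        (fun j => (j.1 + 1) * y j)]
      exact hym
    have h2 : ∑ j, (j.1 + 1) * (Function.update y i (y i + 1) j)
        = (i.1 + 1) * (y i + 1) + ∑ j ∈ Finset.univ \ {i}, (j.1 + 1) * y j := by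
      rw [show (fun j : Fin m => (j.1 + 1) * (Function.update y i (y i + 1) j))
          = Function.update (fun j : Fin m => (j.1 + 1) * y j) i ((i.1 + 1) * (y i + 1))
          from update_mul_eq m y i _]
      exact Finset.sum_update_of_mem (Finset.mem_univ i) _ _
    rw [h2]
    have e1 : (i.1 + 1) * (y i + 1) = (i.1 + 1) * y i + (i.1 + 1) := by ring
    have hi : i.1 + 1 ≤ m := i.2
    omega
  · intro y hy
    obtain ⟨hy1, hy2⟩ := Finset.mem_filter.mp hy
    funext j
    by_cases h : j = i
    · subst h
      simp [Function.update_apply]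
      omega
    · simp [Function.update_apply, h]
  · intro y hy
    funext j
    by_cases h : j = i
    · subst h
      simp [Function.update_apply]
    · simp [Function.update_apply, h]
  · intro y hy
    obtain ⟨hy1, hy2⟩ := Finset.mem_filter.mp hy
    obtain ⟨c, hc⟩ : ∃ c, y i = c + 1 := ⟨y i - 1, by omega⟩
    have e1 : ∏ j, f a q n (j.1 + 1) (y j)
        = f a q n (i.1 + 1) (y i) * ∏ j ∈ Finset.univ \ {i}, f a q n (j.1 + 1) (y j) :=
      Finset.prod_eq_mul_prod_sdiff_singleton_of_mem (Finset.mem_univ i) _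
    have e2 : ∏ j, f a q n (j.1 + 1) (Function.update y i (y i - 1) j)
        = f a q n (i.1 + 1) (y i - 1) * ∏ j ∈ Finset.univ \ {i}, f a q n (j.1 + 1) (y j) := by
      rw [show (fun j : Fin m => f a q n (j.1 + 1) (Function.update y i (y i - 1) j))
          = Function.update (fun j : Fin m => f a q n (j.1 + 1) (y j)) i
              (f a q n (i.1 + 1) (y i - 1)) from update_f_eq a q n m y i _]
      exact Finset.prod_update_of_mem (Finset.mem_univ i) _ _
    rw [e1, e2, hc]
    simp only [Nat.add_sub_cancel]
    rw [← mul_assoc, ← mul_assoc, f_step a q n _ c (Nat.succ_ne_zero _)]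

lemma Rb_rec (m : ℕ) :
    (m : ℝ) * Rb a q n m m
      = ∑ k ∈ Finset.range m, p a q n (k + 1) * Rb a q n (m - 1 - k) (m - 1 - k) := by
  calc (m : ℝ) * Rb a q n m m
      = ∑ y ∈ ParB m m, (m : ℝ) * ∏ j, f a q n (j.1 + 1) (y j) := by
        rw [Rb, Finset.mul_sum]
    _ = ∑ y ∈ ParB m m, ∑ i : Fin m,
          (((i.1 + 1) * y i : ℕ) : ℝ) * ∏ j, f a q n (j.1 + 1) (y j) := by
        refine Finset.sum_congr rfl fun y hy => ?_
        rw [← Finset.sum_mul]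
        congr 1
        rw [← Nat.cast_sum]
        exact congrArg _ (mem_ParB.mp hy).symm
    _ = ∑ i : Fin m, ∑ y ∈ ParB m m,
          (((i.1 + 1) * y i : ℕ) : ℝ) * ∏ j, f a q n (j.1 + 1) (y j) := Finset.sum_comm
    _ = ∑ i : Fin m, p a q n (i.1 + 1) * Rb a q n m (m - (i.1 + 1)) :=
        Finset.sum_congr rfl fun i _ => Rb_rec_term a q n m i
    _ = ∑ i : Fin m, p a q n (i.1 + 1) * Rb a q n (m - 1 - i.1) (m - 1 - i.1) := by
        refine Finset.sum_congr rfl fun i _ => ?_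
        rw [show m - (i.1 + 1) = m - 1 - i.1 by omega,
          stab a q n (by omega : m - 1 - i.1 ≤ m)]
    _ = ∑ k ∈ Finset.range m, p a q n (k + 1) * Rb a q n (m - 1 - k) (m - 1 - k) :=
        Fin.sum_univ_eq_sum_range (fun k => p a q n (k + 1) * Rb a q n (m - 1 - k) (m - 1 - k)) m

lemma Rb_zero : Rb a q n 0 0 = 1 := by
  rw [Rb]
  rw [show ParB 0 0 = {(fun j => 0 : Fin 0 → ℕ)} from ?_]
  · simp
  · ext y
    rw [mem_ParB]
    simp [Finset.mem_singleton]
    exact funext fun j => j.elim0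

lemma tri_comm (g : ℕ → ℕ → ℝ) (m : ℕ) :
    ∑ k ∈ Finset.range m, ∑ j ∈ Finset.range (m - k), g k j
      = ∑ j ∈ Finset.range m, ∑ k ∈ Finset.range (m - j), g k j := by
  rw [Finset.sum_sigma', Finset.sum_sigma']
  refine Finset.sum_nbij' (i := fun s => ⟨s.2, s.1⟩) (j := fun s => ⟨s.2, s.1⟩)
    ?_ ?_ ?_ ?_ ?_
  · rintro ⟨k, j⟩ hs
    simp only [Finset.mem_sigma, Finset.mem_range] at *
    omega
  · rintro ⟨j, k⟩ hs
    simp only [Finset.mem_sigma, Finset.mem_range] at *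
    omega
  · rintro ⟨k, j⟩ _; rfl
  · rintro ⟨j, k⟩ _; rfl
  · rintro ⟨k, j⟩ _; rfl

lemma sum_juggle (x : ℝ) (H P : ℕ → ℝ) (m : ℕ)
    (IH : ∀ t : ℕ, (t : ℝ) * H t = ∑ k ∈ Finset.range t, P (k + 1) * H (t - 1 - k)) :
    ∑ k ∈ Finset.range m, (P (k + 1) + x ^ (k + 1)) *
        ∑ j ∈ Finset.range (m - 1 - k + 1), x ^ j * H (m - 1 - k - j)
      = (m : ℝ) * ∑ j ∈ Finset.range (m + 1), x ^ j * H (m - j) := by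
  have step1 : ∀ k ∈ Finset.range m,
      (P (k + 1) + x ^ (k + 1)) * ∑ j ∈ Finset.range (m - 1 - k + 1), x ^ j * H (m - 1 - k - j)
        = (∑ j ∈ Finset.range (m - k), P (k + 1) * (x ^ j * H (m - 1 - k - j)))
          + ∑ j ∈ Finset.range (m - k), x ^ (k + 1) * (x ^ j * H (m - 1 - k - j)) := by
    intro k hk
    rw [Finset.mem_range] at hk
    rw [show m - 1 - k + 1 = m - k by omega, add_mul, Finset.mul_sum, Finset.mul_sum]
  rw [Finset.sum_congr rfl step1, Finset.sum_add_distrib]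
  have partA : ∑ k ∈ Finset.range m, ∑ j ∈ Finset.range (m - k),
        P (k + 1) * (x ^ j * H (m - 1 - k - j))
      = ∑ j ∈ Finset.range (m + 1), ((m - j : ℕ) : ℝ) * (x ^ j * H (m - j)) := by
    rw [tri_comm]
    have inner : ∀ j ∈ Finset.range m,
        ∑ k ∈ Finset.range (m - j), P (k + 1) * (x ^ j * H (m - 1 - k - j))
          = ((m - j : ℕ) : ℝ) * (x ^ j * H (m - j)) := by
      intro j hj
      rw [Finset.mem_range] at hj
      have e : ∀ k ∈ Finset.range (m - j),
          P (k + 1) * (x ^ j * H (m - 1 - k - j))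
            = x ^ j * (P (k + 1) * H ((m - j) - 1 - k)) := by
        intro k hk
        rw [show m - 1 - k - j = (m - j) - 1 - k by omega]
        ring
      rw [Finset.sum_congr rfl e, ← Finset.mul_sum, ← IH (m - j)]
      ring
    rw [Finset.sum_congr rfl inner, Finset.sum_range_succ]
    simp
  have partB : ∑ k ∈ Finset.range m, ∑ j ∈ Finset.range (m - k),
        x ^ (k + 1) * (x ^ j * H (m - 1 - k - j))
      = ∑ j ∈ Finset.range (m + 1), (j : ℝ) * (x ^ j * H (m - j)) := by
    have e1 : ∀ k ∈ Finset.range m,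
        ∑ j ∈ Finset.range (m - k), x ^ (k + 1) * (x ^ j * H (m - 1 - k - j))
          = ∑ j ∈ Finset.range (m - k), x ^ (m - j) * H j := by
      intro k hk
      rw [Finset.mem_range] at hk
      rw [← Finset.sum_range_reflect (fun j => x ^ (m - j) * H j) (m - k)]
      refine Finset.sum_congr rfl fun j hj => ?_
      rw [Finset.mem_range] at hj
      rw [show m - (m - k - 1 - j) = (k + 1) + j by omega,
        show m - k - 1 - j = m - 1 - k - j by omega, pow_add]
      ring
    rw [Finset.sum_congr rfl e1, tri_comm (fun k j => x ^ (m - j) * H j)]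
    have e2 : ∀ j ∈ Finset.range m,
        ∑ _k ∈ Finset.range (m - j), x ^ (m - j) * H j
          = ((m - j : ℕ) : ℝ) * (x ^ (m - j) * H j) := by
      intro j _
      rw [Finset.sum_const, Finset.card_range, nsmul_eq_mul]
    rw [Finset.sum_congr rfl e2,
      ← Finset.sum_range_reflect (fun j => ((m - j : ℕ) : ℝ) * (x ^ (m - j) * H j)) m,
      Finset.sum_range_succ' (fun j => (j : ℝ) * (x ^ j * H (m - j))) m]
    simp only [Nat.cast_zero, zero_mul, add_zero]
    refine Finset.sum_congr rfl fun j hj => ?_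
    rw [Finset.mem_range] at hj
    rw [show m - (m - 1 - j) = j + 1 by omega, show m - (j + 1) = m - 1 - j by omega]
  rw [partA, partB, ← Finset.sum_add_distrib, Finset.mul_sum]
  refine Finset.sum_congr rfl fun j hj => ?_
  rw [Finset.mem_range, Nat.lt_succ_iff] at hj
  rw [Nat.cast_sub hj]
  ring

lemma h_empty (m n' : ℕ) (h : n' < q) : recSum1 a q m n' = if m = 0 then 1 else 0 := by
  cases m with
  | zero => rfl
  | succ m =>
    show (∑ N ∈ Finset.Icc q n', a N * recSum1 a q m N) = _
    rw [Finset.Icc_eq_empty (by omega)]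
    simp

lemma h_single (m : ℕ) : recSum1 a q m q = a q ^ m := by
  induction m with
  | zero => rfl
  | succ m ih =>
    show (∑ N ∈ Finset.Icc q q, a N * recSum1 a q m N) = _
    rw [Finset.Icc_self, Finset.sum_singleton, ih, pow_succ]
    ring

lemma Icc_succ_ins (n' : ℕ) (h : q ≤ n' + 1) :
    Finset.Icc q (n' + 1) = insert (n' + 1) (Finset.Icc q n') := by
  ext N
  simp only [Finset.mem_Icc, Finset.mem_insert]
  omega

lemma p_succ (n' k : ℕ) (h : q ≤ n' + 1) :
    p a q (n' + 1) k = p a q n' k + a (n' + 1) ^ k := by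
  rw [p, p, Icc_succ_ins q n' h, Finset.sum_insert (by simp), add_comm]

lemma h_add (m n' : ℕ) (h : q ≤ n' + 1) :
    recSum1 a q m (n' + 1)
      = ∑ j ∈ Finset.range (m + 1), a (n' + 1) ^ j * recSum1 a q (m - j) n' := by
  induction m with
  | zero => simp [recSum1]
  | succ m ih =>
    show (∑ N ∈ Finset.Icc q (n' + 1), a N * recSum1 a q m N) = _
    rw [Icc_succ_ins q n' h, Finset.sum_insert (by simp), ih,
      Finset.sum_range_succ' (fun j => a (n' + 1) ^ j * recSum1 a q (m + 1 - j) n') (m + 1)]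
    congr 1
    · rw [Finset.mul_sum]
      refine Finset.sum_congr rfl fun j hj => ?_
      rw [show m + 1 - (j + 1) = m - j by omega, pow_succ]
      ring
    · show (∑ N ∈ Finset.Icc q n', a N * recSum1 a q m N) = _
      simp [recSum1]

lemma h_rec_of_lt {n' : ℕ} (h : n' < q) (m : ℕ) :
    (m : ℝ) * recSum1 a q m n'
      = ∑ k ∈ Finset.range m, p a q n' (k + 1) * recSum1 a q (m - 1 - k) n' := by
  have hp : ∀ k, p a q n' k = 0 := fun k => by
    rw [p, Finset.Icc_eq_empty (by omega)]; simp
  cases m with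
  | zero => simp
  | succ m =>
    rw [h_empty a q _ _ h]
    simp [hp]

lemma h_rec_single (m : ℕ) :
    (m : ℝ) * recSum1 a q m q
      = ∑ k ∈ Finset.range m, p a q q (k + 1) * recSum1 a q (m - 1 - k) q := by
  have hp : ∀ k, p a q q k = a q ^ k := fun k => by
    rw [p, Finset.Icc_self, Finset.sum_singleton]
  rw [h_single]
  have e : ∀ k ∈ Finset.range m,
      p a q q (k + 1) * recSum1 a q (m - 1 - k) q = a q ^ m := by
    intro k hk
    rw [Finset.mem_range] at hk
    rw [hp, h_single, ← pow_add, show k + 1 + (m - 1 - k) = m by omega]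
  rw [Finset.sum_congr rfl e, Finset.sum_const, Finset.card_range, nsmul_eq_mul]

lemma h_rec (n' m : ℕ) :
    (m : ℝ) * recSum1 a q m n'
      = ∑ k ∈ Finset.range m, p a q n' (k + 1) * recSum1 a q (m - 1 - k) n' := by
  induction n' generalizing m with
  | zero =>
    rcases Nat.eq_zero_or_pos q with hq | hq
    · subst hq; exact h_rec_single a 0 m
    · exact h_rec_of_lt a q hq m
  | succ n' ih =>
    by_cases hq : q ≤ n' + 1
    · rcases eq_or_lt_of_le hq with he | hlt
      · subst he; exact h_rec_single a (n' + 1) m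
      · calc (m : ℝ) * recSum1 a q m (n' + 1)
            = (m : ℝ) * ∑ j ∈ Finset.range (m + 1),
                a (n' + 1) ^ j * recSum1 a q (m - j) n' := by rw [h_add a q m n' hq]
          _ = ∑ k ∈ Finset.range m, (p a q n' (k + 1) + a (n' + 1) ^ (k + 1)) *
                ∑ j ∈ Finset.range (m - 1 - k + 1),
                  a (n' + 1) ^ j * recSum1 a q (m - 1 - k - j) n' :=
              (sum_juggle (a (n' + 1)) (fun t => recSum1 a q t n')
                (fun t => p a q n' t) m (fun t => ih t)).symm
          _ = ∑ k ∈ Finset.range m,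
                p a q (n' + 1) (k + 1) * recSum1 a q (m - 1 - k) (n' + 1) := by
              refine Finset.sum_congr rfl fun k hk => ?_
              rw [p_succ a q n' (k + 1) hq, h_add a q (m - 1 - k) n' hq]
    · exact h_rec_of_lt a q (by omega) m

lemma main (m n' : ℕ) : recSum1 a q m n' = Rb a q n' m m := by
  induction m using Nat.strong_induction_on with
  | _ m IH =>
    cases m with
    | zero => rw [Rb_zero]; rfl
    | succ m =>
      have h1 := h_rec a q n' (m + 1)
      have h2 := Rb_rec a q n' (m + 1)
      have h3 : ∑ k ∈ Finset.range (m + 1),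
            p a q n' (k + 1) * recSum1 a q (m + 1 - 1 - k) n'
          = ∑ k ∈ Finset.range (m + 1),
            p a q n' (k + 1) * Rb a q n' (m + 1 - 1 - k) (m + 1 - 1 - k) :=
        Finset.sum_congr rfl fun k hk => by rw [IH (m + 1 - 1 - k) (by omega)]
      exact mul_left_cancel₀ (by exact_mod_cast Nat.succ_ne_zero m) (h1.trans (h3.trans h2.symm))

end RedThm

theorem stmt_12 (m q n : ℕ) (hqn : q ≤ n) (a : ℕ → ℝ) :
    recSum1 a q m n
      = ∑ᶠ y ∈ {y : Fin m → ℕ | ∑ i, (i.1 + 1) * y i = m},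
          ∏ i : Fin m,
            (1 / (Nat.factorial (y i) : ℝ))
              * ((1 / (i.1 + 1 : ℝ)) * ∑ N ∈ Finset.Icc q n, (a N) ^ (i.1 + 1)) ^ (y i) := by
  have hset : {y : Fin m → ℕ | ∑ i, (i.1 + 1) * y i = m} = ↑(RedThm.ParB m m) := by
    ext y
    simp [RedThm.mem_ParB]
  rw [hset, finsum_mem_coe_finset, RedThm.main a q m n, RedThm.Rb]
  refine Finset.sum_congr rfl fun y _ => Finset.prod_congr rfl fun i _ => ?_
  simp only [RedThm.f, RedThm.p]
  norm_cast
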